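/- Let c ∈ ℂ \ {0}, let t > 0 be fixed, and let F : ℝⁿ → ℂ be bounded and continuous. Suppose there exists a sequence (τ_k) in ℝⁿ with |τ_k| → +∞ such that F(·+τ_k) → c·F(·) uniformly on compact subsets of ℝⁿ. Then the function x ↦ (G(t)F)(x) := (4πt)^{−n/2} ∫_{ℝⁿ} e^{−|y|²/(4t)} F(x−y) dy (the action of the Gaussian semigroup) is bounded and continuous, and (G(t)F)(·+τ_k) → c·(G(t)F)(·) uniformly on compact subsets of ℝⁿ; i.e. G(t)F is uniformly Poisson c-stable with the same sequence. -/

import Mathlib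

open MeasureTheory Filter Topology Real
open scoped Convolution

/-- The action of the Gaussian semigroup at time `t > 0` on `F : ℝⁿ → ℂ`:
`(G(t)F)(x) = (4πt)^{-n/2} ∫_{ℝⁿ} e^{-|y|²/(4t)} F(x−y) dy`. -/
noncomputable def gaussAction (n : ℕ) (t : ℝ) (F : EuclideanSpace ℝ (Fin n) → ℂ)
    (x : EuclideanSpace ℝ (Fin n)) : ℂ :=
  (((4 * Real.pi * t) ^ (-(n : ℝ) / 2) : ℝ) : ℂ) *
    ∫ y : EuclideanSpace ℝ (Fin n), (Real.exp (-‖y‖ ^ 2 / (4 * t)) : ℂ) * F (x - y)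

/-- If `F : ℝⁿ → ℂ` is bounded, continuous and uniformly Poisson `c`-stable with
sequence `(τ_k)`, then so is `G(t)F` for each fixed `t > 0`, with the same sequence. -/
theorem stmt15 (n : ℕ) (c : ℂ) (hc : c ≠ 0) (t : ℝ) (ht : 0 < t)
    (F : EuclideanSpace ℝ (Fin n) → ℂ) (hFc : Continuous F)
    (hFb : ∃ C, ∀ x, ‖F x‖ ≤ C)
    (τ : ℕ → EuclideanSpace ℝ (Fin n)) (hτ : Tendsto (fun k => ‖τ k‖) atTop atTop)
    (hrec : ∀ K : Set (EuclideanSpace ℝ (Fin n)), IsCompact K →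
      TendstoUniformlyOn (fun k x => F (x + τ k)) (fun x => c * F x) atTop K) :
    Continuous (gaussAction n t F) ∧
    (∃ C, ∀ x, ‖gaussAction n t F x‖ ≤ C) ∧
    ∀ K : Set (EuclideanSpace ℝ (Fin n)), IsCompact K →
      TendstoUniformlyOn (fun k x => gaussAction n t F (x + τ k))
        (fun x => c * gaussAction n t F x) atTop K := by
  obtain ⟨C, hC⟩ := hFb
  have hC' : ∀ x, ‖F x‖ ≤ C := fun x => by exact hC x
  have hC0 : 0 ≤ C := le_trans (norm_nonneg _) (hC' 0)
  set A : ℝ := (4 * Real.pi * t) ^ (-(n : ℝ) / 2) with hA_def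
  have hA : 0 < A := Real.rpow_pos_of_pos (by positivity) _
  set f : EuclideanSpace ℝ (Fin n) → ℂ :=
    fun y => ((Real.exp (-‖y‖ ^ 2 / (4 * t)) : ℝ) : ℂ) with hf_def
  have hfc : Continuous f := by
    exact Complex.continuous_ofReal.comp (Real.continuous_exp.comp (by fun_prop))
  have hf : Integrable f := by
    have hb : (0:ℝ) < (((1/(4*t):ℝ)):ℂ).re := by simpa using by positivity
    have h := GaussianFourier.integrable_cexp_neg_mul_sq_norm_add
      (V := EuclideanSpace ℝ (Fin n)) (b := ((1/(4*t):ℝ):ℂ)) hb 0 0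
    convert h using 2 with y
    simp only [hf_def]
    rw [Complex.ofReal_exp]
    rw [show ((((-‖y‖ ^ 2 / (4 * t)) : ℝ)):ℂ) = -((1/(4*t):ℝ):ℂ) * (‖y‖:ℂ) ^ 2 +
      0 * ((inner ℝ (0 : EuclideanSpace ℝ (Fin n)) y : ℝ):ℂ) from by push_cast; ring]
  have hfnorm : ∀ y, ‖f y‖ = Real.exp (-‖y‖ ^ 2 / (4 * t)) := fun y => by
    show ‖((Real.exp (-‖y‖ ^ 2 / (4 * t)) : ℝ) : ℂ)‖ = _
    rw [Complex.norm_real, Real.norm_eq_abs]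
    exact abs_of_pos (Real.exp_pos _)
  -- generic integrability of f times a bounded continuous function
  have hIntGen : ∀ (H : EuclideanSpace ℝ (Fin n) → ℂ) (D : ℝ), Continuous H →
      (∀ z, ‖H z‖ ≤ D) → Integrable (fun y => f y * H y) := by
    intro H D hHc hHD
    refine (hf.norm.mul_const D).mono' ((hfc.mul hHc).aestronglyMeasurable) ?_
    filter_upwards with y
    rw [norm_mul]
    exact mul_le_mul_of_nonneg_left (hHD y) (norm_nonneg _)
  set I : ℝ := ∫ y, ‖f y‖ with hI_def
  have hI0 : 0 ≤ I := integral_nonneg fun y => norm_nonneg _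
  have hGA : ∀ x, gaussAction n t F x = (A:ℂ) * ∫ y, f y * F (x - y) := fun x => rfl
  -- continuity
  have hcont : Continuous (gaussAction n t F) := by
    have hbg : BddAbove (Set.range fun x => ‖F x‖) := ⟨C, by rintro _ ⟨x, rfl⟩; exact hC' x⟩
    have hconv : Continuous (f ⋆[ContinuousLinearMap.mul ℂ ℂ, volume] F) :=
      hbg.continuous_convolution_right_of_integrable _ hf hFc
    have : gaussAction n t F =
        fun x => (A:ℂ) * (f ⋆[ContinuousLinearMap.mul ℂ ℂ, volume] F) x := by
      funext x; rw [hGA, convolution_def]; rfl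
    rw [this]
    exact continuous_const.mul hconv
  -- boundedness helper
  have hbound : ∀ (H : EuclideanSpace ℝ (Fin n) → ℂ) (D : ℝ), Continuous H → 0 ≤ D →
      (∀ z, ‖H z‖ ≤ D) → ‖∫ y, f y * H y‖ ≤ I * D := by
    intro H D hHc hD0 hHD
    calc ‖∫ y, f y * H y‖ ≤ ∫ y, ‖f y * H y‖ := norm_integral_le_integral_norm _
      _ ≤ ∫ y, ‖f y‖ * D := by
          refine integral_mono ((hIntGen H D hHc hHD).norm) (hf.norm.mul_const D) fun y => ?_
          rw [norm_mul]
          exact mul_le_mul_of_nonneg_left (hHD y) (norm_nonneg _)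
      _ = I * D := by rw [integral_mul_const]
  refine ⟨hcont, ⟨A * (I * C), fun x => ?_⟩, ?_⟩
  · rw [hGA, norm_mul, Complex.norm_real,
      Real.norm_eq_abs, abs_of_pos hA]
    exact mul_le_mul_of_nonneg_left
      (hbound _ C (hFc.comp (continuous_const.sub continuous_id)) hC0 fun z => hC' _) hA.le
  -- tail estimate
  have tail : ∀ δ : ℝ, 0 < δ → ∃ R : ℝ,
      ∫ y in (Metric.closedBall (0 : EuclideanSpace ℝ (Fin n)) R)ᶜ, ‖f y‖ < δ := by
    intro δ hδ
    have hmono := tendsto_setIntegral_of_monotone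
      (s := fun m : ℕ => Metric.closedBall (0 : EuclideanSpace ℝ (Fin n)) m)
      (fun m => measurableSet_closedBall)
      (fun a b hab => Metric.closedBall_subset_closedBall (by exact_mod_cast hab))
      (by rw [Metric.iUnion_closedBall_nat]; exact hf.norm.integrableOn)
    rw [Metric.iUnion_closedBall_nat, setIntegral_univ] at hmono
    have hto : Tendsto (fun m : ℕ =>
        I - ∫ y in Metric.closedBall (0 : EuclideanSpace ℝ (Fin n)) m, ‖f y‖) atTop (𝓝 0) := by
      have h0 := (tendsto_const_nhds (x := I)).sub hmono
      rw [← hI_def, sub_self] at h0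
      exact h0
    obtain ⟨m, hm⟩ := (hto.eventually (gt_mem_nhds hδ)).exists
    refine ⟨m, ?_⟩
    have hadd := integral_add_compl
      (measurableSet_closedBall (x := (0 : EuclideanSpace ℝ (Fin n))) (ε := (m:ℝ))) hf.norm
    have : (∫ y in (Metric.closedBall (0 : EuclideanSpace ℝ (Fin n)) (m:ℝ))ᶜ, ‖f y‖)
        = I - ∫ y in Metric.closedBall (0 : EuclideanSpace ℝ (Fin n)) (m:ℝ), ‖f y‖ := by
      rw [hI_def]; linarith [hadd]
    rw [this]; exact hm
  -- uniform convergence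
  intro K hK
  rw [Metric.tendstoUniformlyOn_iff]
  intro ε hε
  set D : ℝ := (‖c‖ + 1) * C with hD_def
  have hD0 : 0 ≤ D := by positivity
  set ε₁ : ℝ := ε / (2 * A * (I + 1)) with hε₁_def
  have hε₁ : 0 < ε₁ := by positivity
  set δ : ℝ := ε / (2 * A * (D + 1)) with hδ_def
  have hδ : 0 < δ := by positivity
  obtain ⟨R, hR⟩ := tail δ hδ
  set B := Metric.closedBall (0 : EuclideanSpace ℝ (Fin n)) R with hB_def
  set K' := (fun p : EuclideanSpace ℝ (Fin n) × EuclideanSpace ℝ (Fin n) => p.1 - p.2) ''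
    (K ×ˢ B) with hK'_def
  have hK'c : IsCompact K' :=
    (hK.prod (isCompact_closedBall _ _)).image (continuous_fst.sub continuous_snd)
  have hmem : ∀ x ∈ K, ∀ y ∈ B, x - y ∈ K' := fun x hx y hy =>
    ⟨(x, y), Set.mk_mem_prod hx hy, rfl⟩
  filter_upwards [Metric.tendstoUniformlyOn_iff.mp (hrec K' hK'c) ε₁ hε₁] with k hk x hx
  -- pointwise estimate
  set h : EuclideanSpace ℝ (Fin n) → ℂ := fun y => c * F (x - y) - F (x + τ k - y) with hh_def
  have hhc : Continuous h := by
    apply Continuous.sub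
    · exact continuous_const.mul (hFc.comp (continuous_const.sub continuous_id))
    · exact hFc.comp (continuous_const.sub continuous_id)
  have hhD : ∀ y, ‖h y‖ ≤ D := by
    intro y
    calc ‖h y‖ ≤ ‖c * F (x - y)‖ + ‖F (x + τ k - y)‖ := norm_sub_le _ _
      _ ≤ ‖c‖ * C + C := by
          rw [norm_mul]
          exact add_le_add (mul_le_mul_of_nonneg_left (hC' _) (norm_nonneg _)) (hC' _)
      _ = D := by rw [hD_def]; ring
  have hhball : ∀ y ∈ B, ‖h y‖ ≤ ε₁ := by
    intro y hy
    have := hk (x - y) (hmem x hx y hy)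
    rw [dist_eq_norm] at this
    have heq : x + τ k - y = x - y + τ k := by abel
    rw [hh_def]
    simp only []
    rw [heq]
    exact this.le
  have hint1 : Integrable (fun y => f y * (c * F (x - y))) :=
    hIntGen _ (‖c‖ * C) (continuous_const.mul (hFc.comp (continuous_const.sub continuous_id)))
      fun z => by rw [norm_mul]; exact mul_le_mul_of_nonneg_left (hC' _) (norm_nonneg _)
  have hint2 : Integrable (fun y => f y * F (x + τ k - y)) :=
    hIntGen _ C (hFc.comp (continuous_const.sub continuous_id)) fun z => hC' _
  have hdiff : c * gaussAction n t F x - gaussAction n t F (x + τ k)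
      = (A:ℂ) * ∫ y, f y * h y := by
    rw [hGA, hGA]
    have h1 : c * (∫ y, f y * F (x - y)) = ∫ y, f y * (c * F (x - y)) := by
      rw [← integral_const_mul]
      congr 1; funext y; ring
    rw [mul_left_comm, h1, ← mul_sub, ← integral_sub hint1 hint2]
    congr 1
    refine integral_congr_ae (Filter.Eventually.of_forall fun y => ?_)
    simp only [hh_def]; ring
  have hintfh : Integrable (fun y => f y * h y) := hIntGen _ D hhc hhD
  have hintnorm : Integrable (fun y => ‖f y‖ * ‖h y‖) := by
    refine (hf.norm.mul_const D).mono' ((hfc.norm.mul hhc.norm).aestronglyMeasurable) ?_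
    filter_upwards with y
    rw [Real.norm_eq_abs, abs_of_nonneg (mul_nonneg (norm_nonneg _) (norm_nonneg _))]
    exact mul_le_mul_of_nonneg_left (hhD y) (norm_nonneg _)
  have hsplit : (∫ y, ‖f y‖ * ‖h y‖) = (∫ y in B, ‖f y‖ * ‖h y‖) +
      ∫ y in Bᶜ, ‖f y‖ * ‖h y‖ :=
    (integral_add_compl measurableSet_closedBall hintnorm).symm
  have hball : (∫ y in B, ‖f y‖ * ‖h y‖) ≤ ε₁ * I := by
    calc (∫ y in B, ‖f y‖ * ‖h y‖) ≤ ∫ y in B, ‖f y‖ * ε₁ := by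
          refine setIntegral_mono_on hintnorm.integrableOn
            ((hf.norm.mul_const ε₁).integrableOn) measurableSet_closedBall fun y hy => ?_
          exact mul_le_mul_of_nonneg_left (hhball y hy) (norm_nonneg _)
      _ = (∫ y in B, ‖f y‖) * ε₁ := by rw [integral_mul_const]
      _ ≤ I * ε₁ := by
          refine mul_le_mul_of_nonneg_right ?_ hε₁.le
          exact setIntegral_le_integral hf.norm (Filter.Eventually.of_forall fun y => norm_nonneg _)
      _ = ε₁ * I := mul_comm _ _
  have hcompl : (∫ y in Bᶜ, ‖f y‖ * ‖h y‖) ≤ D * δ := by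
    calc (∫ y in Bᶜ, ‖f y‖ * ‖h y‖) ≤ ∫ y in Bᶜ, ‖f y‖ * D := by
          refine setIntegral_mono_on hintnorm.integrableOn
            ((hf.norm.mul_const D).integrableOn) measurableSet_closedBall.compl fun y hy => ?_
          exact mul_le_mul_of_nonneg_left (hhD y) (norm_nonneg _)
      _ = (∫ y in Bᶜ, ‖f y‖) * D := by rw [integral_mul_const]
      _ ≤ δ * D := mul_le_mul_of_nonneg_right hR.le (hD0)
      _ = D * δ := mul_comm _ _
  have hnorm : ‖c * gaussAction n t F x - gaussAction n t F (x + τ k)‖ ≤ A * (ε₁ * I + D * δ) := by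
    rw [hdiff, norm_mul, Complex.norm_real, Real.norm_eq_abs, abs_of_pos hA]
    refine mul_le_mul_of_nonneg_left ?_ hA.le
    calc ‖∫ y, f y * h y‖ ≤ ∫ y, ‖f y * h y‖ := norm_integral_le_integral_norm _
      _ = ∫ y, ‖f y‖ * ‖h y‖ := by congr 1; funext y; rw [norm_mul]
      _ ≤ ε₁ * I + D * δ := by rw [hsplit]; exact add_le_add hball hcompl
  have hfinal : A * (ε₁ * I + D * δ) < ε := by
    rw [hε₁_def, hδ_def]
    have hAne : A ≠ 0 := ne_of_gt hA
    have h1 : ε / (2 * A * (I + 1)) * I < ε / (2 * A) := by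
      rw [div_mul_eq_mul_div, div_lt_div_iff₀ (by positivity) (by positivity)]
      nlinarith
    have h2 : D * (ε / (2 * A * (D + 1))) < ε / (2 * A) := by
      rw [mul_div_assoc', div_lt_div_iff₀ (by positivity) (by positivity)]
      nlinarith
    calc A * (ε / (2 * A * (I + 1)) * I + D * (ε / (2 * A * (D + 1))))
        < A * (ε / (2 * A) + ε / (2 * A)) := by
          exact mul_lt_mul_of_pos_left (add_lt_add h1 h2) hA
      _ = ε := by field_simp; ring
  rw [dist_eq_norm]
  exact lt_of_le_of_lt hnorm hfinal
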